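/- Let K be a generalized curvature tensor on a finite-dimensional real inner product space V, and let b be a symmetric bilinear form on V (equivalently a self-adjoint endomorphism B) that is K-compatible, i.e. K(BX,Y,Z,W) + K(BY,Z,X,W) + K(BZ,X,Y,W) = 0 for all X,Y,Z,W (where K is evaluated with b raised via the metric). Then the tensor K̂(X,Y,Z,W) := K(X,Y,BZ,BW) is again a generalized curvature tensor (has all the symmetries of Definition of K-tensor). -/
import Mathlib


open RealInnerProductSpace

set_option maxHeartbeats 4000000 in
/-- If `K` is a generalized curvature tensor on a finite-dimensional real inner product
space and `B` is a self-adjoint endomorphism (the operator of a symmetric bilinear form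
`b`) that is `K`-compatible, then `K̂(X,Y,Z,W) := K(X,Y,BZ,BW)` is again a generalized
curvature tensor: it has both antisymmetries, the pair symmetry and the first Bianchi
identity. -/
theorem hatK_is_generalized_curvature
    {V : Type*} [NormedAddCommGroup V] [InnerProductSpace ℝ V] [FiniteDimensional ℝ V]
    (K : V →ₗ[ℝ] V →ₗ[ℝ] V →ₗ[ℝ] V →ₗ[ℝ] ℝ)
    (hanti1 : ∀ X Y Z W : V, K X Y Z W = - K Y X Z W)
    (hanti2 : ∀ X Y Z W : V, K X Y Z W = - K X Y W Z)
    (hpair : ∀ X Y Z W : V, K X Y Z W = K Z W X Y)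
    (hbianchi : ∀ X Y Z W : V, K X Y Z W + K Y Z X W + K Z X Y W = 0)
    (B : V →ₗ[ℝ] V)
    (hB : ∀ X Y : V, ⟪B X, Y⟫ = ⟪X, B Y⟫)
    (hcompat : ∀ X Y Z W : V, K (B X) Y Z W + K (B Y) Z X W + K (B Z) X Y W = 0) :
    (∀ X Y Z W : V, K X Y (B Z) (B W) = - K Y X (B Z) (B W)) ∧
    (∀ X Y Z W : V, K X Y (B Z) (B W) = - K X Y (B W) (B Z)) ∧
    (∀ X Y Z W : V, K X Y (B Z) (B W) = K Z W (B X) (B Y)) ∧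
    (∀ X Y Z W : V, K X Y (B Z) (B W) + K Y Z (B X) (B W) + K Z X (B Y) (B W) = 0) := by

  refine ⟨fun X Y Z W => hanti1 X Y (B Z) (B W),
          fun X Y Z W => hanti2 X Y (B Z) (B W), ?_, ?_⟩
  · intro X Y Z W
    linear_combination
          hbianchi X Z W (B (B Y)) -
          hbianchi X Z (B Y) (B W) +
          hbianchi X W (B Y) (B Z) +
          hbianchi Z W (B X) (B Y) +
          ((1/2 : ℝ)) * hcompat X Y Z (B W) +
          ((-1/2 : ℝ)) * hcompat X Y W (B Z) +
          ((-1/2 : ℝ)) * hcompat X Y (B Z) W +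
          ((1/2 : ℝ)) * hcompat X Y (B W) Z +
          ((1/2 : ℝ)) * hcompat X Z Y (B W) +
          ((-1/2 : ℝ)) * hcompat X Z W (B Y) +
          ((1/2 : ℝ)) * hcompat X Z (B Y) W +
          ((1/2 : ℝ)) * hcompat X Z (B W) Y +
          ((-1/2 : ℝ)) * hcompat X W Y (B Z) +
          ((1/2 : ℝ)) * hcompat X W Z (B Y) +
          ((-1/2 : ℝ)) * hcompat X W (B Y) Z +
          ((-1/2 : ℝ)) * hcompat X W (B Z) Y -
          hcompat X (B Y) Z W +
          hcompat X (B Y) W Z -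
          hpair Z W X (B (B Y)) -
          hanti1 W X Z (B (B Y)) +
          hpair Z (B Y) X (B W) +
          ((1/2 : ℝ)) * hanti1 (B Y) X Z (B W) -
          hpair W (B Y) X (B Z) +
          ((-1/2 : ℝ)) * hanti1 (B Y) X W (B Z) -
          hpair W (B X) Z (B Y) +
          ((-1/2 : ℝ)) * hanti1 (B X) Z W (B Y) +
          ((-1/2 : ℝ)) * hanti1 (B X) Y Z (B W) +
          ((-1/2 : ℝ)) * hanti1 (B Y) Z X (B W) +
          ((-1/2 : ℝ)) * hanti1 (B Z) X Y (B W) +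
          ((1/2 : ℝ)) * hanti1 (B X) Y W (B Z) +
          ((1/2 : ℝ)) * hanti1 (B Y) W X (B Z) +
          ((1/2 : ℝ)) * hanti1 (B W) X Y (B Z) +
          ((1/2 : ℝ)) * hanti1 (B X) Y (B Z) W +
          ((1/2 : ℝ)) * hpair (B Y) (B Z) X W +
          ((1/2 : ℝ)) * hanti1 (B (B Z)) X Y W +
          ((-1/2 : ℝ)) * hanti1 (B X) Y (B W) Z +
          ((-1/2 : ℝ)) * hpair (B Y) (B W) X Z +
          ((-1/2 : ℝ)) * hanti1 (B (B W)) X Y Z +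
          ((-1/2 : ℝ)) * hanti1 (B X) Z Y (B W) +
          ((-1/2 : ℝ)) * hanti1 (B Z) Y X (B W) +
          ((1/2 : ℝ)) * hanti1 (B Z) W X (B Y) +
          ((1/2 : ℝ)) * hanti1 (B W) X Z (B Y) +
          ((-1/2 : ℝ)) * hanti1 (B X) Z (B Y) W +
          ((-1/2 : ℝ)) * hanti1 (B Z) (B Y) X W +
          ((-1/2 : ℝ)) * hanti1 (B (B Y)) X Z W +
          ((-1/2 : ℝ)) * hanti1 (B X) Z (B W) Y +
          ((-1/2 : ℝ)) * hpair (B Z) (B W) X Y +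
          ((-1/2 : ℝ)) * hanti1 (B (B W)) X Z Y +
          ((1/2 : ℝ)) * hanti1 (B X) W Y (B Z) +
          ((1/2 : ℝ)) * hanti1 (B W) Y X (B Z) +
          ((-1/2 : ℝ)) * hanti1 (B X) W Z (B Y) +
          ((-1/2 : ℝ)) * hanti1 (B W) Z X (B Y) +
          ((-1/2 : ℝ)) * hanti1 (B Z) X W (B Y) +
          ((1/2 : ℝ)) * hanti1 (B X) W (B Y) Z +
          ((1/2 : ℝ)) * hanti1 (B W) (B Y) X Z +
          ((1/2 : ℝ)) * hanti1 (B (B Y)) X W Z +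
          ((1/2 : ℝ)) * hanti1 (B X) W (B Z) Y +
          ((1/2 : ℝ)) * hanti1 (B W) (B Z) X Y +
          ((1/2 : ℝ)) * hanti1 (B (B Z)) X W Y +
          hpair (B X) (B Y) Z W +
          hanti1 (B (B Y)) Z X W +
          hanti1 (B Z) X (B Y) W -
          hanti2 (B X) (B Y) W Z -
          hanti1 (B (B Y)) W X Z -
          hanti1 (B W) X (B Y) Z +
          ((1/2 : ℝ)) * hpair Z (B Y) X (B W) +
          ((-1/2 : ℝ)) * hpair W (B Y) X (B Z) +
          ((-1/2 : ℝ)) * hanti2 Y (B X) (B Z) W +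
          ((1/2 : ℝ)) * hanti2 Y (B X) (B W) Z +
          ((1/2 : ℝ)) * hpair Z (B X) Y (B W) +
          ((1/2 : ℝ)) * hpair Y (B Z) X (B W) +
          ((-1/2 : ℝ)) * hpair W (B Z) X (B Y) +
          ((1/2 : ℝ)) * hanti2 Z (B X) (B Y) W +
          ((1/2 : ℝ)) * hpair (B Y) (B Z) X W +
          ((1/2 : ℝ)) * hanti2 Z (B X) (B W) Y +
          ((1/2 : ℝ)) * hanti2 X (B (B W)) Z Y +
          ((-1/2 : ℝ)) * hpair W (B X) Y (B Z) +
          ((-1/2 : ℝ)) * hpair Y (B W) X (B Z) +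
          ((1/2 : ℝ)) * hpair W (B X) Z (B Y) +
          ((1/2 : ℝ)) * hpair Z (B W) X (B Y) +
          ((-1/2 : ℝ)) * hanti2 W (B X) (B Y) Z +
          ((-1/2 : ℝ)) * hpair (B Y) (B W) X Z +
          ((-1/2 : ℝ)) * hanti2 X (B (B Y)) W Z +
          ((-1/2 : ℝ)) * hanti2 W (B X) (B Z) Y +
          ((-1/2 : ℝ)) * hpair (B Z) (B W) X Y +
          ((-1/2 : ℝ)) * hanti2 X (B (B Z)) W Y -
          hpair Z (B (B Y)) X W -
          hanti2 X (B Z) (B Y) W +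
          hpair (B X) (B Y) Z W +
          hpair W (B (B Y)) X Z +
          hanti2 X (B W) (B Y) Z +
          ((-1/2 : ℝ)) * hpair Z (B X) Y (B W) +
          ((1/2 : ℝ)) * hpair W (B X) Z (B Y) +
          ((1/2 : ℝ)) * hpair W (B X) Y (B Z)
  · intro X Y Z W
    linear_combination
          hbianchi X Y (B Z) (B W) -
          hbianchi X Z (B Y) (B W) +
          hbianchi Y Z (B X) (B W) -
          hcompat X Y Z (B W) +
          hcompat X Z Y (B W) +
          hanti1 Z X (B Y) (B W) -
          hpair Y (B Z) X (B W) +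
          hpair Z (B Y) X (B W) -
          hpair Z (B X) Y (B W) +
          hanti1 (B Y) Z X (B W) -
          hanti1 (B X) Z Y (B W) -
          hanti1 (B Z) Y X (B W) -
          hpair Z (B Y) X (B W) +
          hpair Z (B X) Y (B W) +
          hpair Y (B Z) X (B W)
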